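/- arXiv:2309.15080 — 3 statements merged into one kernel-verified Lean document; each statement's English description precedes it below -/
import Mathlib

section
/- Let S and P be commuting bounded linear operators on a complex Hilbert space H. Then (S,P) is a Γ-contraction if and only if (0,S,P) is a 𝔓-contraction. -/
open ContinuousLinearMap

noncomputable section

/-- The operator norm of a 2×2 complex matrix, acting on ℂ² with the Euclidean norm. -/
noncomputable def matOpNorm (M : Matrix (Fin 2) (Fin 2) ℂ) : ℝ :=
  ‖Matrix.toEuclideanCLM (𝕜 := ℂ) M‖

/-- The closed pentablock 𝔓̄ ⊆ ℂ³ : the set of (a₂₁, tr A₀, det A₀) over 2×2 matrices A₀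
of operator norm at most 1. -/
def pentablock : Set (ℂ × ℂ × ℂ) :=
  {x | ∃ M : Matrix (Fin 2) (Fin 2) ℂ, matOpNorm M ≤ 1 ∧ x = (M 1 0, M.trace, M.det)}

/-- The closed symmetrized bidisc Γ ⊆ ℂ². -/
def symBidisc : Set (ℂ × ℂ) :=
  {x | ∃ z w : ℂ, ‖z‖ ≤ 1 ∧ ‖w‖ ≤ 1 ∧ x = (z + w, z * w)}

/-- sup of |f| over a subset of ℂ³, for a polynomial f in three variables. -/
noncomputable def supAbs3 (X : Set (ℂ × ℂ × ℂ)) (f : MvPolynomial (Fin 3) ℂ) : ℝ :=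
  sSup ((fun z : ℂ × ℂ × ℂ => ‖MvPolynomial.eval ![z.1, z.2.1, z.2.2] f‖) '' X)

/-- sup of |g| over a subset of ℂ², for a polynomial g in two variables. -/
noncomputable def supAbs2 (X : Set (ℂ × ℂ)) (g : MvPolynomial (Fin 2) ℂ) : ℝ :=
  sSup ((fun z : ℂ × ℂ => ‖MvPolynomial.eval ![z.1, z.2] g‖) '' X)

variable {H : Type*} [NormedAddCommGroup H] [InnerProductSpace ℂ H]

/-- Evaluation f(A,S,P) of a three-variable polynomial at a commuting triple of operators. -/
noncomputable def opEval3 (A S P : H →L[ℂ] H) (f : MvPolynomial (Fin 3) ℂ) : H →L[ℂ] H :=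
  ∑ m ∈ f.support, f.coeff m • (A ^ m 0 * S ^ m 1 * P ^ m 2)

/-- Evaluation g(S,P) of a two-variable polynomial at a commuting pair of operators. -/
noncomputable def opEval2 (S P : H →L[ℂ] H) (g : MvPolynomial (Fin 2) ℂ) : H →L[ℂ] H :=
  ∑ m ∈ g.support, g.coeff m • (S ^ m 0 * P ^ m 1)

/-- A commuting triple (A,S,P) is a 𝔓-contraction if the von Neumann inequality over the
closed pentablock holds for every polynomial in three variables. -/
def IsPContraction (A S P : H →L[ℂ] H) : Prop :=
  Commute A S ∧ Commute A P ∧ Commute S P ∧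
    ∀ f : MvPolynomial (Fin 3) ℂ, ‖opEval3 A S P f‖ ≤ supAbs3 pentablock f

/-- A commuting pair (S,P) is a Γ-contraction if the von Neumann inequality over the
closed symmetrized bidisc holds for every polynomial in two variables. -/
def IsGammaContraction (S P : H →L[ℂ] H) : Prop :=
  Commute S P ∧
    ∀ g : MvPolynomial (Fin 2) ℂ, ‖opEval2 S P g‖ ≤ supAbs2 symBidisc g

section PentaAux

open MvPolynomial Metric Finset

/-! ### Polynomial evaluation lemmas -/

variable {H : Type*} [NormedAddCommGroup H] [InnerProductSpace ℂ H]

lemma opEval2_eq_sum_subset (S P : H →L[ℂ] H) (g : MvPolynomial (Fin 2) ℂ)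
    {s : Finset (Fin 2 →₀ ℕ)} (hs : g.support ⊆ s) :
    opEval2 S P g = ∑ m ∈ s, g.coeff m • (S ^ m 0 * P ^ m 1) :=
  Finset.sum_subset hs (fun m _ hm => by
    rw [MvPolynomial.notMem_support_iff.mp hm, zero_smul])

lemma opEval2_add (S P : H →L[ℂ] H) (g₁ g₂ : MvPolynomial (Fin 2) ℂ) :
    opEval2 S P (g₁ + g₂) = opEval2 S P g₁ + opEval2 S P g₂ := by
  classical
  rw [opEval2_eq_sum_subset S P (g₁ + g₂) (MvPolynomial.support_add),
    opEval2_eq_sum_subset S P g₁ (Finset.subset_union_left (s₂ := g₂.support)),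
    opEval2_eq_sum_subset S P g₂ (Finset.subset_union_right (s₁ := g₁.support)),
    ← Finset.sum_add_distrib]
  exact Finset.sum_congr rfl fun m _ => by rw [MvPolynomial.coeff_add, add_smul]

lemma opEval2_sum (S P : H →L[ℂ] H) {ι : Type*} (s : Finset ι)
    (F : ι → MvPolynomial (Fin 2) ℂ) :
    opEval2 S P (∑ i ∈ s, F i) = ∑ i ∈ s, opEval2 S P (F i) :=
  map_sum (AddMonoidHom.mk' (opEval2 S P) (opEval2_add S P)) F s

lemma opEval2_monomial (S P : H →L[ℂ] H) (m : Fin 2 →₀ ℕ) (c : ℂ) :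
    opEval2 S P (MvPolynomial.monomial m c) = c • (S ^ m 0 * P ^ m 1) := by
  classical
  rcases eq_or_ne c 0 with rfl | hc
  · simp [opEval2]
  · rw [opEval2, MvPolynomial.support_monomial]
    simp [hc, MvPolynomial.coeff_monomial]

/-- The slice polynomial `g(x,y) = f(0,x,y)`. -/
noncomputable def sliceF (f : MvPolynomial (Fin 3) ℂ) : MvPolynomial (Fin 2) ℂ :=
  ∑ m ∈ f.support.filter (fun m => m 0 = 0),
    MvPolynomial.monomial (Finsupp.single 0 (m 1) + Finsupp.single 1 (m 2)) (f.coeff m)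

lemma slice_exp0 (m : Fin 3 →₀ ℕ) :
    ((Finsupp.single (0 : Fin 2) (m 1) + Finsupp.single (1 : Fin 2) (m 2)) : Fin 2 →₀ ℕ) 0
      = m 1 := by
  simp [Finsupp.single_apply]

lemma slice_exp1 (m : Fin 3 →₀ ℕ) :
    ((Finsupp.single (0 : Fin 2) (m 1) + Finsupp.single (1 : Fin 2) (m 2)) : Fin 2 →₀ ℕ) 1
      = m 2 := by
  simp [Finsupp.single_apply]

lemma slice_eval (f : MvPolynomial (Fin 3) ℂ) (t d : ℂ) :
    MvPolynomial.eval ![t, d] (sliceF f) = MvPolynomial.eval ![0, t, d] f := by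
  classical
  have hL : MvPolynomial.eval ![t, d] (sliceF f)
      = ∑ m ∈ f.support.filter (fun m => m 0 = 0),
          MvPolynomial.coeff m f * (t ^ m 1 * d ^ m 2) := by
    rw [sliceF, map_sum]
    refine Finset.sum_congr rfl fun m hm => ?_
    rw [MvPolynomial.monomial_add_single, ← MvPolynomial.C_mul_X_pow_eq_monomial]
    simp [mul_assoc]
  have hR : MvPolynomial.eval ![0, t, d] f
      = ∑ m ∈ f.support.filter (fun m => m 0 = 0),
          MvPolynomial.coeff m f * (t ^ m 1 * d ^ m 2) := by
    rw [MvPolynomial.eval_eq', ← Finset.sum_filter_of_ne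
      (p := fun m => m 0 = 0) (fun m _ h => ?_)]
    · refine Finset.sum_congr rfl fun m hm => ?_
      have hm0 : m 0 = 0 := (Finset.mem_filter.mp hm).2
      simp [Fin.prod_univ_three, hm0, mul_assoc]
    · by_contra h0
      apply h
      simp [Fin.prod_univ_three, zero_pow h0]
  rw [hL, hR]

lemma slice_opEval (S P : H →L[ℂ] H) (f : MvPolynomial (Fin 3) ℂ) :
    opEval3 0 S P f = opEval2 S P (sliceF f) := by
  classical
  have hL : opEval3 0 S P f
      = ∑ m ∈ f.support.filter (fun m => m 0 = 0),
          MvPolynomial.coeff m f • (S ^ m 1 * P ^ m 2) := by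
    rw [opEval3, ← Finset.sum_filter_of_ne (p := fun m => m 0 = 0) (fun m _ h => ?_)]
    · refine Finset.sum_congr rfl fun m hm => ?_
      have hm0 : m 0 = 0 := (Finset.mem_filter.mp hm).2
      rw [hm0, pow_zero, one_mul]
    · by_contra h0
      apply h
      rw [zero_pow h0, zero_mul, zero_mul, smul_zero]
  have hR : opEval2 S P (sliceF f)
      = ∑ m ∈ f.support.filter (fun m => m 0 = 0),
          MvPolynomial.coeff m f • (S ^ m 1 * P ^ m 2) := by
    rw [sliceF, opEval2_sum]
    refine Finset.sum_congr rfl fun m hm => ?_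
    rw [opEval2_monomial, slice_exp0, slice_exp1]
  rw [hL, hR]

lemma rename_opEval (S P : H →L[ℂ] H) (g : MvPolynomial (Fin 2) ℂ) :
    opEval3 0 S P (MvPolynomial.rename Fin.succ g) = opEval2 S P g := by
  classical
  have hinj : Function.Injective (Fin.succ : Fin 2 → Fin 3) := Fin.succ_injective _
  rw [opEval3, MvPolynomial.support_rename_of_injective hinj, Finset.sum_image
    (fun a _ b _ h => Finsupp.mapDomain_injective hinj h), opEval2]
  refine Finset.sum_congr rfl fun m _ => ?_
  have h0 : (Finsupp.mapDomain Fin.succ m) 0 = 0 :=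
    Finsupp.mapDomain_notin_range _ _ (by rintro ⟨i, hi⟩; exact Fin.succ_ne_zero i hi)
  have h1 : (Finsupp.mapDomain Fin.succ m) 1 = m 0 := Finsupp.mapDomain_apply hinj m 0
  have h2 : (Finsupp.mapDomain Fin.succ m) 2 = m 1 := Finsupp.mapDomain_apply hinj m 1
  rw [MvPolynomial.coeff_rename_mapDomain _ hinj, h0, h1, h2, pow_zero, one_mul]

lemma rename_eval (g : MvPolynomial (Fin 2) ℂ) (a t d : ℂ) :
    MvPolynomial.eval ![a, t, d] (MvPolynomial.rename Fin.succ g) =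
      MvPolynomial.eval ![t, d] g := by
  have hc : (![a, t, d] ∘ Fin.succ) = ![t, d] := by
    funext i
    fin_cases i <;> rfl
  rw [MvPolynomial.eval_rename, hc]

/-! ### Geometry of the pentablock and symmetrized bidisc -/

lemma mem_pentablock_of_mem_symBidisc {t d : ℂ} (h : (t, d) ∈ symBidisc) :
    ((0 : ℂ), t, d) ∈ pentablock := by
  obtain ⟨z, w, hz, hw, h⟩ := h
  obtain ⟨rfl, rfl⟩ : t = z + w ∧ d = z * w := by
    simpa [Prod.ext_iff] using h
  refine ⟨Matrix.diagonal ![z, w], ?_, ?_⟩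
  · refine ContinuousLinearMap.opNorm_le_bound _ zero_le_one (fun x => ?_)
    rw [one_mul]
    have happ : ∀ i, (Matrix.toEuclideanCLM (𝕜 := ℂ) (Matrix.diagonal ![z, w]) x) i =
        ![z, w] i * x i := fun i => by
      show Matrix.mulVec (Matrix.diagonal ![z, w]) (fun j => x j) i = _
      rw [Matrix.mulVec_diagonal]
    rw [EuclideanSpace.norm_eq, EuclideanSpace.norm_eq]
    refine Real.sqrt_le_sqrt (Finset.sum_le_sum fun i _ => ?_)
    rw [happ i, norm_mul, mul_pow]
    have h1 : ‖![z, w] i‖ ≤ 1 := by fin_cases i <;> simpa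
    have h2 : ‖![z, w] i‖ ^ 2 ≤ 1 := by nlinarith [norm_nonneg (![z, w] i)]
    calc ‖![z, w] i‖ ^ 2 * ‖x i‖ ^ 2 ≤ 1 * ‖x i‖ ^ 2 :=
          mul_le_mul_of_nonneg_right h2 (by positivity)
      _ = ‖x i‖ ^ 2 := one_mul _
  · have e10 : Matrix.diagonal ![z, w] 1 0 = 0 := Matrix.diagonal_apply_ne _ (by norm_num)
    have e00 : Matrix.diagonal ![z, w] 0 0 = z := Matrix.diagonal_apply_eq _ _
    have e11 : Matrix.diagonal ![z, w] 1 1 = w := Matrix.diagonal_apply_eq _ _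
    have e01 : Matrix.diagonal ![z, w] 0 1 = 0 := Matrix.diagonal_apply_ne _ (by norm_num)
    rw [Matrix.trace_fin_two, Matrix.det_fin_two, e10, e00, e11, e01]
    simp

lemma root_norm_le {M : Matrix (Fin 2) (Fin 2) ℂ} (hM : matOpNorm M ≤ 1) {z : ℂ}
    (hz : z ^ 2 - M.trace * z + M.det = 0) : ‖z‖ ≤ 1 := by
  have hmem : z ∈ spectrum ℂ M := by
    rw [spectrum.mem_iff]
    intro hu
    rw [Matrix.isUnit_iff_isUnit_det] at hu
    have : ((algebraMap ℂ (Matrix (Fin 2) (Fin 2) ℂ)) z - M).det =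
        z ^ 2 - M.trace * z + M.det := by
      rw [Matrix.det_fin_two, Matrix.trace_fin_two, Matrix.det_fin_two]
      simp [Matrix.algebraMap_eq_diagonal, Matrix.diagonal, Matrix.sub_apply]
      ring
    rw [this, hz] at hu
    exact hu.ne_zero rfl
  have hmem' : z ∈ spectrum ℂ (Matrix.toEuclideanCLM (𝕜 := ℂ) M) := by
    rwa [AlgEquiv.spectrum_eq (Matrix.toEuclideanCLM (𝕜 := ℂ)) M]
  exact (spectrum.norm_le_norm_of_mem hmem').trans hM

lemma mem_symBidisc_of_mem_pentablock {a t d : ℂ} (h : (a, t, d) ∈ pentablock) :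
    (t, d) ∈ symBidisc := by
  obtain ⟨M, hM, h⟩ := h
  obtain ⟨ha, rfl, rfl⟩ : a = M 1 0 ∧ t = M.trace ∧ d = M.det := by
    simpa [Prod.ext_iff] using h
  obtain ⟨z, hz⟩ := Complex.exists_root (f := Polynomial.X ^ 2 -
    Polynomial.C M.trace * Polynomial.X + Polynomial.C M.det) (by
      have : (Polynomial.X ^ 2 - Polynomial.C M.trace * Polynomial.X +
          Polynomial.C M.det).degree = 2 := by compute_degree!
      rw [this]; norm_num)
  have hz' : z ^ 2 - M.trace * z + M.det = 0 := by
    simpa using hz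
  have hw' : (M.trace - z) ^ 2 - M.trace * (M.trace - z) + M.det = 0 := by
    ring_nf
    ring_nf at hz'
    linear_combination hz'
  refine ⟨z, M.trace - z, root_norm_le hM hz', root_norm_le hM hw', ?_⟩
  have : z * (M.trace - z) = M.det := by linear_combination -hz'
  rw [this]
  ring_nf

/-! ### Compactness -/

lemma isCompact_symBidisc : IsCompact symBidisc := by
  have : symBidisc = (fun p : ℂ × ℂ => (p.1 + p.2, p.1 * p.2)) ''
      (Metric.closedBall 0 1 ×ˢ Metric.closedBall 0 1) := by
    ext x
    constructor
    · rintro ⟨z, w, hz, hw, rfl⟩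
      exact ⟨(z, w), ⟨by simpa using hz, by simpa using hw⟩, rfl⟩
    · rintro ⟨⟨z, w⟩, ⟨hz, hw⟩, rfl⟩
      exact ⟨z, w, by simpa using hz, by simpa using hw, rfl⟩
  rw [this]
  exact ((isCompact_closedBall _ _).prod (isCompact_closedBall _ _)).image
    (by continuity)

lemma isCompact_pentablock : IsCompact pentablock := by
  set e := (Matrix.toEuclideanCLM (𝕜 := ℂ) (n := Fin 2)).symm with he
  have hcont : Continuous e := LinearMap.continuous_of_finiteDimensional
    ({ toFun := e, map_add' := map_add e, map_smul' := map_smul e } :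
      (EuclideanSpace ℂ (Fin 2) →L[ℂ] EuclideanSpace ℂ (Fin 2)) →ₗ[ℂ] Matrix (Fin 2) (Fin 2) ℂ)
  have hF : Continuous (fun M : Matrix (Fin 2) (Fin 2) ℂ => (M 1 0, M.trace, M.det)) := by
    refine Continuous.prodMk ?_ (Continuous.prodMk ?_ ?_)
    · exact (continuous_apply _).comp (continuous_apply _)
    · exact Continuous.matrix_trace continuous_id
    · exact Continuous.matrix_det continuous_id
  have hproper : ProperSpace (EuclideanSpace ℂ (Fin 2) →L[ℂ] EuclideanSpace ℂ (Fin 2)) :=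
    FiniteDimensional.proper ℂ _
  have hset : pentablock = (fun M : Matrix (Fin 2) (Fin 2) ℂ => (M 1 0, M.trace, M.det)) ''
      (e '' Metric.closedBall 0 1) := by
    ext x
    constructor
    · rintro ⟨M, hM, rfl⟩
      refine ⟨M, ⟨Matrix.toEuclideanCLM (𝕜 := ℂ) M, ?_, ?_⟩, rfl⟩
      · simpa [Metric.mem_closedBall, dist_zero_right, matOpNorm] using hM
      · simp [he]
    · rintro ⟨M, ⟨y, hy, rfl⟩, rfl⟩
      refine ⟨e y, ?_, rfl⟩
      have : Matrix.toEuclideanCLM (𝕜 := ℂ) (e y) = y := by simp [he]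
      rw [matOpNorm, this]
      simpa [Metric.mem_closedBall, dist_zero_right] using hy
  rw [hset]
  exact (((isCompact_closedBall _ _).image hcont).image hF)

lemma cont3 (f : MvPolynomial (Fin 3) ℂ) :
    Continuous fun z : ℂ × ℂ × ℂ => ‖MvPolynomial.eval ![z.1, z.2.1, z.2.2] f‖ := by
  have h1 : Continuous fun z : ℂ × ℂ × ℂ => (![z.1, z.2.1, z.2.2] : Fin 3 → ℂ) :=
    continuous_pi fun i => by fin_cases i <;> simp <;> fun_prop
  exact (Continuous.comp (MvPolynomial.continuous_eval f) h1).norm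

lemma cont2 (g : MvPolynomial (Fin 2) ℂ) :
    Continuous fun z : ℂ × ℂ => ‖MvPolynomial.eval ![z.1, z.2] g‖ := by
  have h1 : Continuous fun z : ℂ × ℂ => (![z.1, z.2] : Fin 2 → ℂ) :=
    continuous_pi fun i => by fin_cases i <;> simp <;> fun_prop
  exact (Continuous.comp (MvPolynomial.continuous_eval g) h1).norm

lemma symBidisc_nonempty : symBidisc.Nonempty :=
  ⟨(0, 0), 0, 0, by norm_num, by norm_num, by norm_num⟩

lemma pentablock_nonempty : pentablock.Nonempty := by
  refine ⟨((0 : ℂ), 0, 0), 0, ?_, by simp⟩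
  rw [matOpNorm, map_zero, norm_zero]
  norm_num

end PentaAux

theorem stmt4 {H : Type*} [NormedAddCommGroup H] [InnerProductSpace ℂ H] [CompleteSpace H]
    (S P : H →L[ℂ] H) (hSP : Commute S P) :
    IsGammaContraction S P ↔ IsPContraction (0 : H →L[ℂ] H) S P := by
  constructor
  · rintro ⟨-, hvN⟩
    refine ⟨Commute.zero_left S, Commute.zero_left P, hSP, fun f => ?_⟩
    rw [slice_opEval]
    refine (hvN (sliceF f)).trans ?_
    refine csSup_le_csSup ((isCompact_pentablock.image (cont3 f)).bddAbove)
      (symBidisc_nonempty.image _) ?_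
    rintro x ⟨⟨t, d⟩, hmem, rfl⟩
    exact ⟨((0 : ℂ), t, d), mem_pentablock_of_mem_symBidisc hmem, by simp [slice_eval]⟩
  · rintro ⟨-, -, -, hvN⟩
    refine ⟨hSP, fun g => ?_⟩
    rw [← rename_opEval S P g]
    refine (hvN _).trans ?_
    refine csSup_le_csSup ((isCompact_symBidisc.image (cont2 g)).bddAbove)
      (pentablock_nonempty.image _) ?_
    rintro x ⟨⟨a, t, d⟩, hmem, rfl⟩
    exact ⟨(t, d), mem_symBidisc_of_mem_pentablock hmem, by simp [rename_eval]⟩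
end
end

section
/- If (a,s,p) ∈ 𝔓̄ (the closed pentablock), then |a|² + |s|²/4 ≤ 1; equivalently, (a, s/2) belongs to the closed biball 𝔹̄₂. -/
open ContinuousLinearMap

noncomputable section


lemma col_bound (M : Matrix (Fin 2) (Fin 2) ℂ)
    (h : ‖Matrix.toEuclideanCLM (𝕜 := ℂ) M‖ ≤ 1) (j : Fin 2) :
    ‖M 0 j‖ ^ 2 + ‖M 1 j‖ ^ 2 ≤ 1 := by
  set T := Matrix.toEuclideanCLM (𝕜 := ℂ) M
  set e : EuclideanSpace ℂ (Fin 2) := EuclideanSpace.single j 1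
  have he : ‖e‖ = 1 := by simp [e]
  have hTe : T e = (WithLp.equiv _ _).symm (fun i => M i j) := by
    have : e = (WithLp.equiv _ _).symm (Pi.single j 1) := rfl
    rw [this]
    simp only [T, WithLp.equiv_symm_apply, Matrix.toEuclideanCLM_toLp]
    congr 1
    ext i
    simp [Matrix.mulVec_single]
  have : ‖T e‖ ≤ 1 := by
    calc ‖T e‖ ≤ ‖T‖ * ‖e‖ := T.le_opNorm e
    _ ≤ 1 := by rw [he]; simpa using h
  have h2 : ‖T e‖ ^ 2 ≤ 1 := by nlinarith [norm_nonneg (T e)]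
  rw [hTe, EuclideanSpace.norm_eq] at h2
  rw [Real.sq_sqrt (by positivity)] at h2
  simpa [Fin.sum_univ_two] using h2

set_option synthInstance.maxHeartbeats 400000 in
lemma row_bound (M : Matrix (Fin 2) (Fin 2) ℂ)
    (h : ‖Matrix.toEuclideanCLM (𝕜 := ℂ) M‖ ≤ 1) :
    ‖M 1 0‖ ^ 2 + ‖M 1 1‖ ^ 2 ≤ 1 := by
  have hs : ‖Matrix.toEuclideanCLM (𝕜 := ℂ) (star M)‖ ≤ 1 := by
    rw [map_star, ContinuousLinearMap.star_eq_adjoint]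
    calc ‖ContinuousLinearMap.adjoint (Matrix.toEuclideanCLM (𝕜 := ℂ) M)‖
        = ‖Matrix.toEuclideanCLM (𝕜 := ℂ) M‖ := by
          exact ContinuousLinearMap.adjoint.norm_map _
    _ ≤ 1 := h
  have := col_bound (star M) hs 1
  simpa [Matrix.conjTranspose_apply] using this


/-- The closed biball 𝔹̄₂ ⊆ ℂ². -/
def closedBiball : Set (ℂ × ℂ) :=
  {z | ‖z.1‖ ^ 2 + ‖z.2‖ ^ 2 ≤ 1}

theorem stmt6 (a s p : ℂ) (h : (a, s, p) ∈ pentablock) :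
    ‖a‖ ^ 2 + ‖s‖ ^ 2 / 4 ≤ 1 ∧ (a, s / 2) ∈ closedBiball := by
  obtain ⟨M, hM, heq⟩ := h
  have hM' : ‖Matrix.toEuclideanCLM (𝕜 := ℂ) M‖ ≤ 1 := hM
  have ha : a = M 1 0 := congrArg Prod.fst heq
  have hs : s = M.trace := congrArg (Prod.fst ∘ Prod.snd) heq
  have hc := col_bound M hM' 0
  have hr := row_bound M hM'
  have htr : ‖s‖ ≤ ‖M 0 0‖ + ‖M 1 1‖ := by
    rw [hs, Matrix.trace_fin_two]; exact norm_add_le _ _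
  have key : ‖a‖ ^ 2 + ‖s‖ ^ 2 / 4 ≤ 1 := by
    rw [ha]
    nlinarith [norm_nonneg s, norm_nonneg (M 0 0), norm_nonneg (M 1 1),
      sq_nonneg (‖M 0 0‖ - ‖M 1 1‖), sq_nonneg (‖M 0 0‖ + ‖M 1 1‖)]
  refine ⟨key, ?_⟩
  show ‖a‖ ^ 2 + ‖s / 2‖ ^ 2 ≤ 1
  have h2 : ‖s / 2‖ ^ 2 = ‖s‖ ^ 2 / 4 := by
    rw [norm_div]; norm_num; ring
  rw [h2]; exact key
end
end

section
/- The point (a,s,p) = (√3/2, 1, 0) satisfies (a, s/2) ∈ 𝔹̄₂ (indeed |a|² + |s|²/4 = 1) and (s,p) = (1,0) ∈ Γ, yet (a,s,p) ∉ 𝔓̄. In particular, the converse of the implication '(a,s,p) ∈ 𝔓̄ ⟹ (a,s/2) ∈ 𝔹̄₂ and (s,p) ∈ Γ' fails. -/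
open ContinuousLinearMap Matrix

noncomputable section

lemma key (M : Matrix (Fin 2) (Fin 2) ℂ) (h : matOpNorm M ≤ 1) (x y : ℂ) :
    ‖M 0 0 * x + M 0 1 * y‖ ^ 2 + ‖M 1 0 * x + M 1 1 * y‖ ^ 2 ≤ ‖x‖ ^ 2 + ‖y‖ ^ 2 := by
  set v : EuclideanSpace ℂ (Fin 2) := (WithLp.equiv 2 (Fin 2 → ℂ)).symm ![x, y] with hv
  have h1 : ‖Matrix.toEuclideanCLM (𝕜 := ℂ) M v‖ ≤ ‖v‖ := by
    calc ‖Matrix.toEuclideanCLM (𝕜 := ℂ) M v‖ ≤ matOpNorm M * ‖v‖ := le_opNorm _ _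
    _ ≤ 1 * ‖v‖ := by gcongr
    _ = ‖v‖ := one_mul _
  have h2 : Matrix.toEuclideanCLM (𝕜 := ℂ) M v =
      (WithLp.equiv 2 (Fin 2 → ℂ)).symm (M.mulVec ![x, y]) :=
    Matrix.toEuclideanCLM_toLp M _
  have hsq : ∀ w : EuclideanSpace ℂ (Fin 2), ‖w‖ ^ 2 = ‖w 0‖ ^ 2 + ‖w 1‖ ^ 2 := by
    intro w
    rw [EuclideanSpace.norm_eq, Real.sq_sqrt (by positivity)]
    simp [Fin.sum_univ_two]
  have h3 : ‖Matrix.toEuclideanCLM (𝕜 := ℂ) M v‖ ^ 2 ≤ ‖v‖ ^ 2 :=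
    pow_le_pow_left₀ (norm_nonneg _) h1 2
  rw [hsq, hsq, h2] at h3
  simpa [Matrix.mulVec, dotProduct, Fin.sum_univ_two, hv] using h3

set_option synthInstance.maxHeartbeats 1000000 in
lemma adj {M : Matrix (Fin 2) (Fin 2) ℂ} (h : matOpNorm M ≤ 1) : matOpNorm Mᴴ ≤ 1 := by
  unfold matOpNorm at *
  rw [show Mᴴ = star M from rfl, map_star, ContinuousLinearMap.star_eq_adjoint]
  exact le_trans (le_of_eq (LinearIsometryEquiv.norm_map _ _)) h


set_option maxHeartbeats 1000000 in
theorem stmt11 :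
    ((((Real.sqrt 3 / 2 : ℝ) : ℂ), (1 : ℂ) / 2) ∈ closedBiball ∧
      ‖(((Real.sqrt 3 / 2 : ℝ) : ℂ))‖ ^ 2 + ‖(1 : ℂ)‖ ^ 2 / 4 = 1) ∧
    ((1 : ℂ), (0 : ℂ)) ∈ symBidisc ∧
    ((((Real.sqrt 3 / 2 : ℝ) : ℂ)), (1 : ℂ), (0 : ℂ)) ∉ pentablock := by
  have hs3 : Real.sqrt 3 ^ 2 = 3 := Real.sq_sqrt (by norm_num)
  have hs3nn : (0:ℝ) ≤ Real.sqrt 3 := Real.sqrt_nonneg 3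
  have hs3ge : (1:ℝ) ≤ Real.sqrt 3 := by nlinarith
  have hnorm : ‖(((Real.sqrt 3 / 2 : ℝ) : ℂ))‖ ^ 2 = 3 / 4 := by
    rw [Complex.norm_real, Real.norm_eq_abs, sq_abs]
    nlinarith
  refine ⟨⟨?_, ?_⟩, ?_, ?_⟩
  · show ‖_‖ ^ 2 + ‖_‖ ^ 2 ≤ 1
    simp only [hnorm]
    norm_num
  · rw [hnorm]; norm_num
  · exact ⟨1, 0, by norm_num, by norm_num, by norm_num⟩
  · rintro ⟨M, hM, heq⟩
    set a := M 0 0 with ha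
    set b := M 0 1 with hb
    set c := M 1 0 with hc
    set d := M 1 1 with hd
    have hc' : c = ((Real.sqrt 3 / 2 : ℝ) : ℂ) := by
      have := congrArg Prod.fst heq; simpa using this.symm
    have htr : a + d = 1 := by
      have := congrArg (Prod.fst ∘ Prod.snd) heq
      simpa [Matrix.trace_fin_two, ← ha, ← hd] using this.symm
    have hdet : a * d - b * c = 0 := by
      have := congrArg (Prod.snd ∘ Prod.snd) heq
      simpa [Matrix.det_fin_two, ← ha, ← hb, ← hc, ← hd] using this.symm
    have hnc : ‖c‖ ^ 2 = 3 / 4 := by rw [hc']; exact hnorm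
    -- column bound: ‖a‖² ≤ 1/4
    have hcol := key M hM 1 0
    simp only [mul_one, mul_zero, add_zero, norm_one, norm_zero] at hcol
    have hna : ‖a‖ ^ 2 ≤ 1 / 4 := by nlinarith [hcol, hnc]
    -- row bound: ‖d‖² ≤ 1/4
    have hrow := key Mᴴ (adj hM) 0 1
    simp only [mul_zero, mul_one, zero_add, norm_one, norm_zero] at hrow
    have hMH0 : Mᴴ 0 1 = starRingEnd ℂ c := rfl
    have hMH1 : Mᴴ 1 1 = starRingEnd ℂ d := rfl
    rw [hMH0, hMH1] at hrow
    simp only [RCLike.norm_conj] at hrow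
    have hnd : ‖d‖ ^ 2 ≤ 1 / 4 := by nlinarith [hrow, hnc]
    -- force a = 1/2
    have hna' : ‖a‖ ≤ 1 / 2 := by
      nlinarith [norm_nonneg a]
    have hnd' : ‖d‖ ≤ 1 / 2 := by
      nlinarith [norm_nonneg d]
    have hare : a.re = 1 / 2 := by
      have h1 : a.re ≤ ‖a‖ := Complex.re_le_norm a
      have h2 : d.re ≤ ‖d‖ := Complex.re_le_norm d
      have h3 : a.re + d.re = 1 := by
        have := congrArg Complex.re htr; simpa using this
      linarith
    have haim : a.im = 0 := by
      have h1 : a.re ^ 2 + a.im ^ 2 ≤ 1 / 4 := by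
        have h := hna
        have := Complex.sq_norm a
        rw [Complex.normSq_apply] at this
        nlinarith [h]
      nlinarith [sq_nonneg a.im]
    have haval : a = 1 / 2 := Complex.ext (by simp [hare]) (by simp [haim])
    have hdval : d = 1 / 2 := by
      have : d = 1 - a := by linear_combination htr
      rw [this, haval]; ring
    -- solve for b
    have hs3c : ((Real.sqrt 3 : ℝ) : ℂ) ^ 2 = 3 := by
      rw [← Complex.ofReal_pow, hs3]; norm_num
    have hbval : b = ((Real.sqrt 3 / 6 : ℝ) : ℂ) := by
      have hsne : ((Real.sqrt 3 : ℝ) : ℂ) ≠ 0 := by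
        simp only [ne_eq, Complex.ofReal_eq_zero]
        nlinarith
      rw [haval, hdval, hc'] at hdet
      push_cast at hdet ⊢
      have hb2 : b * ((Real.sqrt 3 : ℝ) : ℂ) = 1 / 2 := by linear_combination -2 * hdet
      linear_combination (((Real.sqrt 3 : ℝ) : ℂ) / 3) * hb2 - (b / 3) * hs3c
    -- final contradiction
    have hfin := key M hM 2 1
    rw [← ha, ← hb, ← hc, ← hd, haval, hbval, hc', hdval] at hfin
    have e1 : (1:ℂ)/2 * 2 + ((Real.sqrt 3 / 6 : ℝ) : ℂ) * 1
        = (((1 + Real.sqrt 3 / 6 : ℝ)) : ℂ) := by push_cast; ring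
    have e2 : (((Real.sqrt 3 / 2 : ℝ)) : ℂ) * 2 + (1:ℂ)/2 * 1
        = (((Real.sqrt 3 + 1/2 : ℝ)) : ℂ) := by push_cast; ring
    rw [e1, e2] at hfin
    simp only [Complex.norm_real, sq_abs] at hfin
    norm_num at hfin
    nlinarith [hfin, hs3, hs3ge]
end
end
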